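/- Let A, B, C be n×n real matrices satisfying B = Bᵀ, C = Cᵀ, A·B = B·Aᵀ, Aᵀ·C = C·A, A² − B·C = I. Then a nonzero complex number λ is an eigenvalue of M_{A,B,C} (viewed as a complex matrix) if and only if (λ + λ⁻¹)/2 is an eigenvalue of A (viewed as a complex matrix). -/

import Mathlib

open Matrix

/-- For `M = M_{A,B,C}` of the block form `[[A, B], [C, Aᵀ]]`, a nonzero complex number `λ`
is an eigenvalue of `M` (as a complex matrix) if and only if `(λ + λ⁻¹)/2` is an eigenvalue
of `A` (as a complex matrix). -/
theorem eigenvalue_blockMatrix_iff {n : ℕ} (A B C : Matrix (Fin n) (Fin n) ℝ)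
    (hB : B = Bᵀ) (hC : C = Cᵀ) (hAB : A * B = B * Aᵀ)
    (hAC : Aᵀ * C = C * A) (hABC : A * A - B * C = 1)
    (l : ℂ) (hl : l ≠ 0) :
    det (l • (1 : Matrix (Fin n ⊕ Fin n) (Fin n ⊕ Fin n) ℂ) -
        (fromBlocks A B C Aᵀ).map (Complex.ofReal ·)) = 0 ↔
      det (((l + l⁻¹) / 2) • (1 : Matrix (Fin n) (Fin n) ℂ) - A.map (Complex.ofReal ·)) = 0 := by
  classical
  have hfun : ((Complex.ofReal ·) : ℝ → ℂ) = ⇑(Complex.ofRealHom) := rfl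
  set f : ℝ →+* ℂ := Complex.ofRealHom with hf
  set A' : Matrix (Fin n) (Fin n) ℂ := A.map f with hA'
  set B' : Matrix (Fin n) (Fin n) ℂ := B.map f with hB'
  set C' : Matrix (Fin n) (Fin n) ℂ := C.map f with hC'
  -- mapped hypotheses
  have hAB' : A' * B' = B' * A'ᵀ := by
    have := congrArg (fun M => M.map f) hAB
    simpa [Matrix.map_mul, Matrix.transpose_map] using this
  have hAC' : A'ᵀ * C' = C' * A' := by
    have := congrArg (fun M => M.map f) hAC
    simpa [Matrix.map_mul, Matrix.transpose_map] using this
  have hABC' : A' * A' - B' * C' = 1 := by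
    have := congrArg (fun M => M.map f) hABC
    simpa [Matrix.map_mul, Matrix.map_sub, Matrix.map_one] using this
  have hABC'T : A'ᵀ * A'ᵀ - C' * B' = 1 := by
    have := congrArg Matrix.transpose hABC'
    have hBs : B'ᵀ = B' := by rw [hB', ← Matrix.transpose_map, ← hB]
    have hCs : C'ᵀ = C' := by rw [hC', ← Matrix.transpose_map, ← hC]
    simpa [Matrix.transpose_sub, Matrix.transpose_mul, hBs, hCs] using this
  set D : Matrix (Fin n) (Fin n) ℂ := (l * l + 1) • 1 - (2 * l) • A' with hD
  set N : Matrix (Fin n ⊕ Fin n) (Fin n ⊕ Fin n) ℂ :=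
    l • 1 - (fromBlocks A B C Aᵀ).map (Complex.ofReal ·) with hNdef
  -- N as a block matrix
  have hN : N = fromBlocks (l • 1 - A') (-B') (-C') (l • 1 - A'ᵀ) := by
    rw [hNdef, hfun, ← Matrix.fromBlocks_one, Matrix.fromBlocks_map, Matrix.fromBlocks_smul,
      Matrix.transpose_map]
    rw [sub_eq_add_neg, Matrix.fromBlocks_neg, Matrix.fromBlocks_add]
    simp [sub_eq_add_neg, A', B', C']
  set N' : Matrix (Fin n ⊕ Fin n) (Fin n ⊕ Fin n) ℂ :=
    fromBlocks (l • 1 - A') B' C' (l • 1 - A'ᵀ) with hN'def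
  -- key product identity
  have hprod : N * N' = fromBlocks D 0 0 Dᵀ := by
    have hTL : (l • 1 - A') * (l • 1 - A') + (-B') * C' = D := by
      have h1 : (l • 1 - A') * (l • 1 - A') + (-B') * C'
          = (l * l) • (1 : Matrix (Fin n) (Fin n) ℂ) - (2 * l) • A' + (A' * A' - B' * C') := by
        simp only [sub_mul, mul_sub, smul_mul_assoc, mul_smul_comm, one_mul, mul_one,
          smul_smul, neg_mul]
        module
      rw [h1, hABC', hD]
      module
    have hTR : (l • 1 - A') * B' + (-B') * (l • 1 - A'ᵀ) = 0 := by
      have h1 : (l • 1 - A') * B' + (-B') * (l • 1 - A'ᵀ) = B' * A'ᵀ - A' * B' := by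
        simp only [sub_mul, mul_sub, smul_mul_assoc, mul_smul_comm, one_mul, mul_one, neg_mul]
        module
      rw [h1, ← hAB', sub_self]
    have hBL : (-C') * (l • 1 - A') + (l • 1 - A'ᵀ) * C' = 0 := by
      have h1 : (-C') * (l • 1 - A') + (l • 1 - A'ᵀ) * C' = C' * A' - A'ᵀ * C' := by
        simp only [sub_mul, mul_sub, smul_mul_assoc, mul_smul_comm, one_mul, mul_one, neg_mul]
        module
      rw [h1, hAC', sub_self]
    have hBR : (-C') * B' + (l • 1 - A'ᵀ) * (l • 1 - A'ᵀ) = Dᵀ := by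
      have h1 : (-C') * B' + (l • 1 - A'ᵀ) * (l • 1 - A'ᵀ)
          = (l * l) • (1 : Matrix (Fin n) (Fin n) ℂ) - (2 * l) • A'ᵀ + (A'ᵀ * A'ᵀ - C' * B') := by
        simp only [sub_mul, mul_sub, smul_mul_assoc, mul_smul_comm, one_mul, mul_one,
          smul_smul, neg_mul]
        module
      have h2 : Dᵀ = (l * l + 1) • 1 - (2 * l) • A'ᵀ := by
        rw [hD]; simp [Matrix.transpose_sub, Matrix.transpose_smul]
      rw [h1, hABC'T, h2]
      module
    rw [hN, hN'def, Matrix.fromBlocks_multiply, hTL, hTR, hBL, hBR]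
  -- det N' = det N via conjugation by E = fromBlocks 1 0 0 (-1)
  set E : Matrix (Fin n ⊕ Fin n) (Fin n ⊕ Fin n) ℂ := fromBlocks 1 0 0 (-1) with hE
  have hEE : E * E = 1 := by
    rw [hE, Matrix.fromBlocks_multiply]
    simp [Matrix.fromBlocks_one]
  have hconj : N' = E * N * E := by
    rw [hE, hN, Matrix.fromBlocks_multiply, Matrix.fromBlocks_multiply, hN'def]
    simp
  have hdetN' : N'.det = N.det := by
    have hE2 : E.det * E.det = 1 := by
      rw [← Matrix.det_mul, hEE, Matrix.det_one]
    have hcomm : E.det * N.det * E.det = N.det * (E.det * E.det) := by ring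
    rw [hconj, Matrix.det_mul, Matrix.det_mul, hcomm, hE2, mul_one]
  -- (det N)^2 = (det D)^2
  have hsq : N.det * N.det = D.det * D.det := by
    have := congrArg Matrix.det hprod
    rw [Matrix.det_mul, hdetN', Matrix.det_fromBlocks_zero₂₁, Matrix.det_transpose] at this
    exact this
  have hmain : N.det = 0 ↔ D.det = 0 := by
    constructor
    · intro h
      have : D.det * D.det = 0 := by rw [← hsq, h, mul_zero]
      exact (mul_self_eq_zero).mp this
    · intro h
      have : N.det * N.det = 0 := by rw [hsq, h, mul_zero]
      exact (mul_self_eq_zero).mp this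
  -- relate D to the shifted matrix
  have hDfact : D = (2 * l) • (((l + l⁻¹) / 2) • (1 : Matrix (Fin n) (Fin n) ℂ)
      - A.map (Complex.ofReal ·)) := by
    rw [hD, smul_sub, smul_smul]
    have : 2 * l * ((l + l⁻¹) / 2) = l * l + 1 := by
      field_simp
    rw [this, hfun]
  have h2l : (2 * l) ≠ 0 := by
    simp [hl]
  have hdetD : D.det = (2 * l) ^ (Fintype.card (Fin n)) *
      (((l + l⁻¹) / 2) • (1 : Matrix (Fin n) (Fin n) ℂ) - A.map (Complex.ofReal ·)).det := by
    rw [hDfact, Matrix.det_smul]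
  rw [hmain, hdetD, mul_eq_zero]
  simp [pow_eq_zero_iff, h2l]
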